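/- The map (sgn, det) : GL₂(ℤ₂) → {±1} × ℤ₂^× is surjective, and the closed commutator subgroup of GL₂(ℤ₂) equals its kernel, i.e. GL₂(ℤ₂)' = ker(sgn) ∩ SL₂(ℤ₂). -/

import Mathlib

open Matrix

/-- The permutation of vectors induced by an invertible matrix. -/
def glToPerm {R : Type*} [CommRing R] (g : GL (Fin 2) R) : Equiv.Perm (Fin 2 → R) where
  toFun v := g.val.mulVec v
  invFun v := (g⁻¹).val.mulVec v
  left_inv v := by
    simp only [Matrix.mulVec_mulVec, ← Units.val_mul, inv_mul_cancel, Units.val_one,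
      Matrix.one_mulVec]
  right_inv v := by
    simp only [Matrix.mulVec_mulVec, ← Units.val_mul, mul_inv_cancel, Units.val_one,
      Matrix.one_mulVec]

def glPermHom (R : Type*) [CommRing R] : GL (Fin 2) R →* Equiv.Perm (Fin 2 → R) where
  toFun := glToPerm
  map_one' := by ext v; simp [glToPerm]
  map_mul' g h := by
    ext v; simp only [glToPerm, Equiv.Perm.coe_mul, Function.comp_apply, Equiv.coe_fn_mk,
      Units.val_mul, Matrix.mulVec_mulVec]

/-- The sign character on `GL₂(𝔽₂) ≅ S₃`, via the permutation action on `𝔽₂²`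
(the zero vector being a fixed point). -/
noncomputable def sgnF2 : GL (Fin 2) (ZMod 2) →* ℤˣ :=
  Equiv.Perm.sign.comp (glPermHom (ZMod 2))

/-- The sign map on `GL₂(ℤ₂)`: reduction mod 2 followed by the sign character. -/
noncomputable def sgn2 : GL (Fin 2) ℤ_[2] →* ℤˣ :=
  sgnF2.comp (Matrix.GeneralLinearGroup.map (PadicInt.toZMod (p := 2)))

open PadicInt
open scoped commutatorElement

/-! ### basic facts about `toZMod` on `ℤ_[2]` -/

lemma toZMod_eq_zero_iff (z : ℤ_[2]) : toZMod z = 0 ↔ (2 : ℤ_[2]) ∣ z := by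
  rw [← RingHom.mem_ker, ker_toZMod, maximalIdeal_eq_span_p, Ideal.mem_span_singleton]
  norm_num

lemma isUnit_of_toZMod_ne (z : ℤ_[2]) (h : toZMod z ≠ 0) : IsUnit z := by
  rw [PadicInt.isUnit_iff]
  rcases lt_or_eq_of_le (PadicInt.norm_le_one z) with h1 | h1
  · exact absurd ((toZMod_eq_zero_iff z).2 ((PadicInt.norm_lt_one_iff_dvd z).1
      (by exact_mod_cast h1))) h
  · exact h1

lemma toZMod_ne_zero_of_isUnit (z : ℤ_[2]) (h : IsUnit z) : toZMod z ≠ 0 := by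
  intro h0
  have h2 : (2 : ℤ_[2]) ∣ z := (toZMod_eq_zero_iff z).1 h0
  have : ‖z‖ < 1 := by
    have := (PadicInt.norm_lt_one_iff_dvd z).2 (by exact_mod_cast h2)
    exact_mod_cast this
  rw [PadicInt.isUnit_iff] at h
  simp [h] at this

lemma toZMod_eq_of_close {y z : ℤ_[2]} (h : ‖z - y‖ < 1) : toZMod z = toZMod y := by
  have hdvd : (2 : ℤ_[2]) ∣ (z - y) := (PadicInt.norm_lt_one_iff_dvd _).1 (by exact_mod_cast h)
  have h0 : toZMod (z - y) = 0 := (toZMod_eq_zero_iff _).2 hdvd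
  rw [map_sub, sub_eq_zero] at h0
  exact h0

/-! ### explicit elements of `GL₂(ℤ₂)` -/

noncomputable def e12 (x : ℤ_[2]) : GL (Fin 2) ℤ_[2] :=
  ⟨!![1,x;0,1], !![1,-x;0,1],
    by rw [Matrix.mul_fin_two, Matrix.one_fin_two]; norm_num,
    by rw [Matrix.mul_fin_two, Matrix.one_fin_two]; norm_num⟩

noncomputable def e21 (x : ℤ_[2]) : GL (Fin 2) ℤ_[2] :=
  ⟨!![1,0;x,1], !![1,0;-x,1],
    by rw [Matrix.mul_fin_two, Matrix.one_fin_two]; norm_num,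
    by rw [Matrix.mul_fin_two, Matrix.one_fin_two]; norm_num⟩

noncomputable def m1 : GL (Fin 2) ℤ_[2] :=
  ⟨!![-1,0;0,1], !![-1,0;0,1],
    by rw [Matrix.mul_fin_two, Matrix.one_fin_two]; norm_num,
    by rw [Matrix.mul_fin_two, Matrix.one_fin_two]; norm_num⟩

noncomputable def m2 : GL (Fin 2) ℤ_[2] :=
  ⟨!![1,0;0,-1], !![1,0;0,-1],
    by rw [Matrix.mul_fin_two, Matrix.one_fin_two]; norm_num,
    by rw [Matrix.mul_fin_two, Matrix.one_fin_two]; norm_num⟩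

noncomputable def W : GL (Fin 2) ℤ_[2] :=
  ⟨!![0,-1;1,0], !![0,1;-1,0],
    by rw [Matrix.mul_fin_two, Matrix.one_fin_two]; norm_num,
    by rw [Matrix.mul_fin_two, Matrix.one_fin_two]; norm_num⟩

noncomputable def d1 (u : ℤ_[2]ˣ) : GL (Fin 2) ℤ_[2] :=
  ⟨!![(u:ℤ_[2]),0;0,1], !![(↑u⁻¹:ℤ_[2]),0;0,1],
    by rw [Matrix.mul_fin_two, Matrix.one_fin_two]; norm_num [Units.mul_inv],
    by rw [Matrix.mul_fin_two, Matrix.one_fin_two]; norm_num [Units.inv_mul]⟩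

noncomputable def dd (u : ℤ_[2]ˣ) : GL (Fin 2) ℤ_[2] :=
  ⟨!![(u:ℤ_[2]),0;0,↑u⁻¹], !![(↑u⁻¹:ℤ_[2]),0;0,u],
    by rw [Matrix.mul_fin_two, Matrix.one_fin_two]; norm_num [Units.mul_inv, Units.inv_mul],
    by rw [Matrix.mul_fin_two, Matrix.one_fin_two]; norm_num [Units.mul_inv, Units.inv_mul]⟩

/-- the anti-diagonal lift of the swap, with determinant `u` -/
noncomputable def wu (u : ℤ_[2]ˣ) : GL (Fin 2) ℤ_[2] :=
  ⟨!![0,-(u:ℤ_[2]);1,0], !![0,1;-(↑u⁻¹:ℤ_[2]),0],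
    by rw [Matrix.mul_fin_two, Matrix.one_fin_two]; norm_num [Units.mul_inv],
    by rw [Matrix.mul_fin_two, Matrix.one_fin_two]; norm_num [Units.inv_mul]⟩

lemma mem_comm {a b : GL (Fin 2) ℤ_[2]} : ⁅a, b⁆ ∈ commutator (GL (Fin 2) ℤ_[2]) := by
  rw [commutator_def]
  exact Subgroup.commutator_mem_commutator (Subgroup.mem_top _) (Subgroup.mem_top _)

lemma e12_comm (t : ℤ_[2]) : e12 (2 * t) = ⁅m1, e12 (-t)⁆ := by
  rw [commutatorElement_def]
  ext : 1
  show (e12 (2*t)).val = m1.val * (e12 (-t)).val * (m1⁻¹).val * ((e12 (-t))⁻¹).val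
  simp only [e12, m1, Units.inv_mk, Units.val_mk]
  rw [Matrix.mul_fin_two, Matrix.mul_fin_two, Matrix.mul_fin_two]
  norm_num
  ring_nf

lemma e21_comm (s : ℤ_[2]) : e21 (2 * s) = ⁅m2, e21 (-s)⁆ := by
  rw [commutatorElement_def]
  ext : 1
  show (e21 (2*s)).val = m2.val * (e21 (-s)).val * (m2⁻¹).val * ((e21 (-s))⁻¹).val
  simp only [e21, m2, Units.inv_mk, Units.val_mk]
  rw [Matrix.mul_fin_two, Matrix.mul_fin_two, Matrix.mul_fin_two]
  norm_num
  ring_nf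

lemma dd_comm (u : ℤ_[2]ˣ) : dd u = ⁅d1 u, W⁆ := by
  rw [commutatorElement_def]
  ext : 1
  show (dd u).val = (d1 u).val * W.val * ((d1 u)⁻¹).val * (W⁻¹).val
  simp only [dd, d1, W, Units.inv_mk, Units.val_mk]
  rw [Matrix.mul_fin_two, Matrix.mul_fin_two, Matrix.mul_fin_two]
  norm_num

noncomputable def H : GL (Fin 2) ℤ_[2] := ⁅W, e12 1⁆

lemma H_mem : H ∈ commutator (GL (Fin 2) ℤ_[2]) := mem_comm

lemma H_val : H.val = !![1,-1;-1,2] := by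
  show (W.val * (e12 1).val * (W⁻¹).val * ((e12 1)⁻¹).val) = _
  simp only [e12, W, Units.inv_mk, Units.val_mk]
  rw [Matrix.mul_fin_two, Matrix.mul_fin_two, Matrix.mul_fin_two]
  norm_num

/-! ### reduction mod 2 -/

noncomputable def π : GL (Fin 2) ℤ_[2] →* GL (Fin 2) (ZMod 2) :=
  Matrix.GeneralLinearGroup.map (PadicInt.toZMod (p := 2))

lemma π_val (g : GL (Fin 2) ℤ_[2]) : (π g).val = g.val.map toZMod := rfl

lemma sgn2_eq (g : GL (Fin 2) ℤ_[2]) : sgn2 g = sgnF2 (π g) := rfl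

lemma sgn2_congr {g g' : GL (Fin 2) ℤ_[2]} (h : g.val.map toZMod = g'.val.map toZMod) :
    sgn2 g = sgn2 g' := by
  rw [sgn2_eq, sgn2_eq]
  congr 1
  exact Units.ext (by rw [π_val, π_val, h])

/-- sign of a "swap"-type element -/
lemma sgnF2_swap (u : GL (Fin 2) (ZMod 2)) (v w : Fin 2 → ZMod 2) (hvw : v ≠ w)
    (h : ∀ x, u.val.mulVec x = Equiv.swap v w x) : sgnF2 u = -1 := by
  have hp : glToPerm u = Equiv.swap v w := Equiv.ext h
  show Equiv.Perm.sign (glPermHom (ZMod 2) u) = -1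
  show Equiv.Perm.sign (glToPerm u) = -1
  rw [hp, Equiv.Perm.sign_swap hvw]

lemma sgnF2_odd (u : GL (Fin 2) (ZMod 2))
    (h : u.val = !![0,1;1,0] ∨ u.val = !![1,1;0,1] ∨ u.val = !![1,0;1,1]) :
    sgnF2 u = -1 := by
  rcases h with h | h | h
  · exact sgnF2_swap u ![1,0] ![0,1] (by decide) (by rw [h]; decide)
  · exact sgnF2_swap u ![0,1] ![1,1] (by decide) (by rw [h]; decide)
  · exact sgnF2_swap u ![1,0] ![1,1] (by decide) (by rw [h]; decide)

lemma classify (m : Matrix (Fin 2) (Fin 2) (ZMod 2)) (h : m.det ≠ 0) :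
    m = 1 ∨ m = !![0,1;1,1] ∨ m = !![1,1;1,0] ∨
    m = !![0,1;1,0] ∨ m = !![1,1;0,1] ∨ m = !![1,0;1,1] := by
  revert h; revert m; decide

/-! ### the congruence subgroup is inside the commutator subgroup -/

lemma mem_comm_of_res_one (g : GL (Fin 2) ℤ_[2]) (hdet : g.val.det = 1)
    (hres : g.val.map toZMod = 1) : g ∈ commutator (GL (Fin 2) ℤ_[2]) := by
  set a := g.val 0 0 with ha'
  set b := g.val 0 1 with hb'
  set c := g.val 1 0 with hc'
  set d := g.val 1 1 with hd'
  have entry : ∀ i j, toZMod (g.val i j) = (1 : Matrix (Fin 2) (Fin 2) (ZMod 2)) i j := by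
    intro i j
    have := congrFun (congrFun hres i) j
    simpa [Matrix.map_apply] using this
  have h00 : toZMod a ≠ 0 := by
    have := entry 0 0
    rw [Matrix.one_apply_eq] at this
    rw [this]; decide
  have hb2 : (2 : ℤ_[2]) ∣ b := (toZMod_eq_zero_iff b).1 (by
    have := entry 0 1; rwa [Matrix.one_apply_ne (by decide)] at this)
  have hc2 : (2 : ℤ_[2]) ∣ c := (toZMod_eq_zero_iff c).1 (by
    have := entry 1 0; rwa [Matrix.one_apply_ne (by decide)] at this)
  have hu : IsUnit a := isUnit_of_toZMod_ne a h00
  obtain ⟨α, hα⟩ := hu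
  have hai : (α : ℤ_[2]) * ↑α⁻¹ = 1 := α.mul_inv
  have hdet2 : a * d - b * c = 1 := by rw [Matrix.det_fin_two] at hdet; exact hdet
  obtain ⟨t, ht⟩ : ∃ t, b * ↑α⁻¹ = 2 * t := by
    obtain ⟨x, hx⟩ := hb2; exact ⟨x * ↑α⁻¹, by rw [hx]; ring⟩
  obtain ⟨s, hs⟩ : ∃ s, c * ↑α⁻¹ = 2 * s := by
    obtain ⟨x, hx⟩ := hc2; exact ⟨x * ↑α⁻¹, by rw [hx]; ring⟩
  have hb : b = ↑α * (2 * t) := by linear_combination (↑α : ℤ_[2]) * ht - b * hai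
  have hc : c = 2 * s * ↑α := by linear_combination (↑α : ℤ_[2]) * hs - c * hai
  have hd : d = 2 * s * ↑α * (2 * t) + ↑α⁻¹ := by
    linear_combination (↑α⁻¹ : ℤ_[2]) * hdet2 +
      (c * ↑α⁻¹) * hb + (↑α * 2 * t) * hs + (- d) * hai + (↑α⁻¹ * d) * hα
  have hgval : g = e21 (2 * s) * dd α * e12 (2 * t) := by
    ext : 1
    show g.val = (e21 (2*s)).val * (dd α).val * (e12 (2*t)).val
    simp only [e21, dd, e12, Units.val_mk]
    rw [Matrix.mul_fin_two, Matrix.mul_fin_two]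
    have : g.val = !![a, b; c, d] := by
      ext i j; fin_cases i <;> fin_cases j <;> rfl
    rw [this]
    ext i j
    fin_cases i <;> fin_cases j <;>
      simp <;>
      [linear_combination (-1 : ℤ_[2]) * hα; linear_combination hb; linear_combination hc;
        linear_combination hd]
  rw [hgval]
  exact Subgroup.mul_mem _ (Subgroup.mul_mem _
    (by rw [e21_comm]; exact mem_comm) (by rw [dd_comm]; exact mem_comm))
    (by rw [e12_comm]; exact mem_comm)


lemma toZMod_two : toZMod (2 : ℤ_[2]) = 0 := by
  rw [show ((2:ℤ_[2])) = ((2:ℕ):ℤ_[2]) from by norm_num, map_natCast]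
  decide

lemma H_res : H.val.map toZMod = !![1,1;1,0] := by
  rw [H_val]
  ext i j
  fin_cases i <;> fin_cases j <;> simp [Matrix.map_apply, toZMod_two] <;> decide

lemma H_det : H.val.det = 1 := by
  rw [H_val, Matrix.det_fin_two_of]; norm_num

lemma mem_comm_of_ker (g : GL (Fin 2) ℤ_[2]) (hdet : g.val.det = 1) (hsgn : sgn2 g = 1) :
    g ∈ commutator (GL (Fin 2) ℤ_[2]) := by
  have hdu : IsUnit (g.val.map toZMod).det := by
    refine ⟨Matrix.GeneralLinearGroup.det (π g), ?_⟩
    rw [Matrix.GeneralLinearGroup.val_det_apply, π_val]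
  rcases classify _ hdu.ne_zero with h | h | h | h | h | h
  · exact mem_comm_of_res_one g hdet h
  · -- residue is the 3-cycle c; multiply by H (residue c²)
    have hgH : g * H ∈ commutator (GL (Fin 2) ℤ_[2]) := by
      apply mem_comm_of_res_one
      · rw [Units.val_mul, Matrix.det_mul, hdet, H_det, one_mul]
      · rw [Units.val_mul, Matrix.map_mul, h, H_res]; decide
    have : g = (g * H) * H⁻¹ := by group
    rw [this]
    exact Subgroup.mul_mem _ hgH (Subgroup.inv_mem _ H_mem)
  · -- residue is c²; multiply by H * H
    have hgH : g * (H * H) ∈ commutator (GL (Fin 2) ℤ_[2]) := by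
      apply mem_comm_of_res_one
      · rw [Units.val_mul, Matrix.det_mul, hdet, Units.val_mul, Matrix.det_mul, H_det, one_mul,
          mul_one]
      · rw [Units.val_mul, Matrix.map_mul, Units.val_mul, Matrix.map_mul, h, H_res]; decide
    have : g = (g * (H * H)) * (H * H)⁻¹ := by group
    rw [this]
    exact Subgroup.mul_mem _ hgH (Subgroup.inv_mem _ (Subgroup.mul_mem _ H_mem H_mem))
  all_goals
    have hodd : sgnF2 (π g) = -1 := sgnF2_odd (π g) (by rw [π_val]; tauto)
    rw [sgn2_eq, hodd] at hsgn
    exact absurd hsgn (by decide)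

lemma isOpen_sgn2_fiber (x : ℤˣ) : IsOpen {g : GL (Fin 2) ℤ_[2] | sgn2 g = x} := by
  rw [isOpen_iff_forall_mem_open]
  intro g₀ hg₀
  refine ⟨{g : GL (Fin 2) ℤ_[2] | ∀ i j, toZMod (g.val i j) = toZMod (g₀.val i j)}, ?_, ?_, ?_⟩
  · intro g hg
    have : g.val.map toZMod = g₀.val.map toZMod := by
      ext i j; simp only [Matrix.map_apply]; exact hg i j
    simpa [Set.mem_setOf_eq, sgn2_congr this] using hg₀
  · have : {g : GL (Fin 2) ℤ_[2] | ∀ i j, toZMod (g.val i j) = toZMod (g₀.val i j)} =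
        (fun g : GL (Fin 2) ℤ_[2] => g.val) ⁻¹'
          (⋂ i, ⋂ j, (fun M : Matrix (Fin 2) (Fin 2) ℤ_[2] => M i j) ⁻¹'
            {y | toZMod y = toZMod (g₀.val i j)}) := by
      ext g; simp
    rw [this]
    apply IsOpen.preimage Units.continuous_val
    apply isOpen_iInter_of_finite; intro i
    apply isOpen_iInter_of_finite; intro j
    apply IsOpen.preimage (continuous_apply_apply i j)
    rw [Metric.isOpen_iff]
    intro y hy
    exact ⟨1, one_pos, fun z hz => by
      simp only [Set.mem_setOf_eq] at hy ⊢
      rw [toZMod_eq_of_close (by simpa [dist_eq_norm] using hz), hy]⟩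
  · intro i j; rfl

lemma ker_closed : IsClosed
    ((sgn2.prod (Matrix.GeneralLinearGroup.det : GL (Fin 2) ℤ_[2] →* ℤ_[2]ˣ)).ker :
      Set (GL (Fin 2) ℤ_[2])) := by
  have hset : ((sgn2.prod (Matrix.GeneralLinearGroup.det : GL (Fin 2) ℤ_[2] →* ℤ_[2]ˣ)).ker :
      Set (GL (Fin 2) ℤ_[2])) =
      {g : GL (Fin 2) ℤ_[2] | sgn2 g = 1} ∩ {g : GL (Fin 2) ℤ_[2] | g.val.det = 1} := by
    ext g
    simp only [SetLike.mem_coe, MonoidHom.mem_ker, MonoidHom.prod_apply, Prod.ext_iff,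
      Set.mem_inter_iff, Set.mem_setOf_eq, Prod.fst_one, Prod.snd_one]
    refine and_congr Iff.rfl ?_
    rw [Units.ext_iff, Matrix.GeneralLinearGroup.val_det_apply, Units.val_one]
  rw [hset]
  apply IsClosed.inter
  · have : {g : GL (Fin 2) ℤ_[2] | sgn2 g = 1} = {g : GL (Fin 2) ℤ_[2] | sgn2 g = -1}ᶜ := by
      ext g
      simp only [Set.mem_setOf_eq, Set.mem_compl_iff]
      rcases Int.units_eq_one_or (sgn2 g) with h | h <;> rw [h] <;> decide
    rw [this]
    exact (isOpen_sgn2_fiber (-1)).isClosed_compl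
  · exact IsClosed.preimage (Continuous.matrix_det Units.continuous_val) isClosed_singleton

/-- `(sgn, det) : GL₂(ℤ₂) → {±1} × ℤ₂ˣ` is surjective and its kernel is the closed
commutator subgroup of `GL₂(ℤ₂)`. -/
theorem sgn_det_GL2_Z2 :
    Function.Surjective
      ⇑(sgn2.prod (Matrix.GeneralLinearGroup.det : GL (Fin 2) ℤ_[2] →* ℤ_[2]ˣ)) ∧
    (commutator (GL (Fin 2) ℤ_[2])).topologicalClosure =
      (sgn2.prod (Matrix.GeneralLinearGroup.det : GL (Fin 2) ℤ_[2] →* ℤ_[2]ˣ)).ker := by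
  constructor
  · rintro ⟨ε, u⟩
    rcases Int.units_eq_one_or ε with rfl | rfl
    · refine ⟨d1 u, ?_⟩
      have hres : (d1 u).val.map toZMod = 1 := by
        have hu1 : toZMod ((u : ℤ_[2])) = 1 := by
          have hne := toZMod_ne_zero_of_isUnit _ u.isUnit
          revert hne; generalize toZMod ((u : ℤ_[2])) = x; revert x; decide
        show (!![(u:ℤ_[2]),0;0,1]).map toZMod = 1
        ext i j
        fin_cases i <;> fin_cases j <;>
          simp [Matrix.map_apply, Matrix.one_apply, hu1]
      have hsgn : sgn2 (d1 u) = 1 := by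
        rw [sgn2_eq]
        have : π (d1 u) = 1 := Units.ext (by rw [π_val, hres]; rfl)
        rw [this, _root_.map_one]
      have hdet : Matrix.GeneralLinearGroup.det (d1 u) = u := by
        refine Units.ext ?_
        rw [Matrix.GeneralLinearGroup.val_det_apply]
        show (!![(u:ℤ_[2]),0;0,1]).det = u
        rw [Matrix.det_fin_two_of]; ring
      simp [MonoidHom.prod_apply, hsgn, hdet]
    · refine ⟨wu u, ?_⟩
      have hres : (wu u).val.map toZMod = !![0,1;1,0] := by
        have hu1 : toZMod (-(u : ℤ_[2])) = 1 := by
          rw [map_neg]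
          have hne := toZMod_ne_zero_of_isUnit _ u.isUnit
          revert hne; generalize toZMod ((u : ℤ_[2])) = x; revert x; decide
        show (!![0,-(u:ℤ_[2]);1,0]).map toZMod = !![0,1;1,0]
        ext i j
        fin_cases i <;> fin_cases j <;> simp [Matrix.map_apply, hu1]
      have hsgn : sgn2 (wu u) = -1 := by
        rw [sgn2_eq]
        exact sgnF2_odd _ (Or.inl (by rw [π_val, hres]))
      have hdet : Matrix.GeneralLinearGroup.det (wu u) = u := by
        refine Units.ext ?_
        rw [Matrix.GeneralLinearGroup.val_det_apply]
        show (!![0,-(u:ℤ_[2]);1,0]).det = u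
        rw [Matrix.det_fin_two_of]; ring
      simp [MonoidHom.prod_apply, hsgn, hdet]
  · have hker : commutator (GL (Fin 2) ℤ_[2]) =
        (sgn2.prod (Matrix.GeneralLinearGroup.det : GL (Fin 2) ℤ_[2] →* ℤ_[2]ˣ)).ker := by
      apply le_antisymm
      · exact Abelianization.commutator_subset_ker _
      · intro g hg
        rw [MonoidHom.mem_ker, MonoidHom.prod_apply, Prod.ext_iff] at hg
        obtain ⟨hsgn, hdetu⟩ := hg
        have hdet : g.val.det = 1 := by
          rw [Units.ext_iff, Matrix.GeneralLinearGroup.val_det_apply] at hdetu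
          exact hdetu
        exact mem_comm_of_ker g hdet hsgn
    rw [hker]
    exact SetLike.ext' (by
      rw [Subgroup.topologicalClosure_coe]
      exact ker_closed.closure_eq)
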